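/- Let S = (V, K) be a connected simplicial complex, G = (Z/2)^r, and J a G-valued edge labelling satisfying the triangle cocycle condition, and let Ŝ be the covering complex on V × G defined by (U1),(U2). Then the connected component of Ŝ containing (v_0, 0) surjects onto S under p^0 if and only if S is connected; and two vertices (v, g), (v, g') lie in the same component iff g + g' lies in the subgroup of G generated by the values J(z) over all edge loops z of S based at v. -/

import Mathlib

/-- Adjacency in the 1-skeleton of S = (V,K): distinct vertices spanning an
edge of K. -/
def adjS {V : Type} [DecidableEq V] (K : Set (Finset V)) (u v : V) : Prop :=
  ({u, v} : Finset V) ∈ K ∧ u ≠ v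

/-- Adjacency in the 1-skeleton of the covering complex Ŝ on V × (ℤ/2)^r
(conditions (U1),(U2)). -/
def covAdj {V : Type} [DecidableEq V] {r : ℕ} (K : Set (Finset V))
    (J : V → V → (Fin r → ZMod 2))
    (p q : V × (Fin r → ZMod 2)) : Prop :=
  adjS K p.1 q.1 ∧ p.2 + q.2 = J p.1 q.1

lemma z2add : ∀ x : ZMod 2, x + x = 0 := by decide

lemma addself {r : ℕ} (a : Fin r → ZMod 2) : a + a = 0 :=
  funext fun i => z2add (a i)

lemma negeq {r : ℕ} (a : Fin r → ZMod 2) : -a = a := by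
  rw [neg_eq_iff_add_eq_zero, addself]

lemma cancel2 {r : ℕ} (a b c : Fin r → ZMod 2) : a + b + (b + c) = a + c := by
  rw [add_assoc, ← add_assoc b, addself, zero_add]

lemma adjS_symm {V : Type} [DecidableEq V] (K : Set (Finset V)) : Symmetric (adjS K) := by
  intro u v ⟨h1, h2⟩
  exact ⟨by rwa [Finset.pair_comm], h2.symm⟩

lemma projP {V : Type} [DecidableEq V] {r : ℕ} (K : Set (Finset V))
    (J : V → V → (Fin r → ZMod 2)) {p q : V × (Fin r → ZMod 2)}
    (h : Relation.ReflTransGen (covAdj K J) p q) :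
    Relation.ReflTransGen (adjS K) p.1 q.1 := by
  induction h with
  | refl => exact .refl
  | tail _ hbc ih => exact ih.tail hbc.1

lemma trans_shiftP {V : Type} [DecidableEq V] {r : ℕ} (K : Set (Finset V))
    (J : V → V → (Fin r → ZMod 2)) (c : Fin r → ZMod 2) {p q : V × (Fin r → ZMod 2)}
    (h : Relation.ReflTransGen (covAdj K J) p q) :
    Relation.ReflTransGen (covAdj K J) (p.1, p.2 + c) (q.1, q.2 + c) := by
  induction h with
  | refl => exact .refl
  | tail _ hbc ih =>
      refine ih.tail ⟨hbc.1, ?_⟩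
      show _ + _ = _
      rw [add_add_add_comm, addself, add_zero]
      exact hbc.2

lemma trans_shift {V : Type} [DecidableEq V] {r : ℕ} (K : Set (Finset V))
    (J : V → V → (Fin r → ZMod 2)) (c : Fin r → ZMod 2) {a b : V}
    {x y : Fin r → ZMod 2}
    (h : Relation.ReflTransGen (covAdj K J) (a, x) (b, y)) :
    Relation.ReflTransGen (covAdj K J) (a, x + c) (b, y + c) :=
  trans_shiftP K J c h

lemma liftPath {V : Type} [DecidableEq V] {r : ℕ} (K : Set (Finset V))
    (J : V → V → (Fin r → ZMod 2)) {a b : V}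
    (h : Relation.ReflTransGen (adjS K) a b) (g : Fin r → ZMod 2) :
    ∃ h', Relation.ReflTransGen (covAdj K J) (a, g) (b, h') := by
  induction h with
  | refl => exact ⟨g, .refl⟩
  | @tail b c _ hbc ih =>
      obtain ⟨h', hp⟩ := ih
      refine ⟨h' + J b c, hp.tail ⟨hbc, ?_⟩⟩
      show h' + (h' + J b c) = J b c
      rw [← add_assoc, addself, zero_add]

lemma pathSum {V : Type} [DecidableEq V] {r : ℕ} (K : Set (Finset V))
    (J : V → V → (Fin r → ZMod 2)) {p q : V × (Fin r → ZMod 2)}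
    (h : Relation.ReflTransGen (covAdj K J) p q) :
    ∃ (s : ℕ) (w : ℕ → V), w 0 = p.1 ∧ w s = q.1 ∧
      (∀ i < s, adjS K (w i) (w (i + 1))) ∧
      p.2 + q.2 = ∑ i ∈ Finset.range s, J (w i) (w (i + 1)) := by
  induction h with
  | refl =>
      exact ⟨0, fun _ => p.1, rfl, rfl, fun i hi => absurd hi (Nat.not_lt_zero i),
        by simp [addself]⟩
  | @tail b c _ hbc ih =>
      obtain ⟨s, w, hw0, hws, hadj, hsum⟩ := ih
      refine ⟨s + 1, fun i => if i ≤ s then w i else c.1, ?_, ?_, ?_, ?_⟩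
      · simpa using hw0
      · simp
      · intro i hi
        by_cases hc : i < s
        · simp only [if_pos (by omega : i ≤ s), if_pos (by omega : i + 1 ≤ s)]
          exact hadj i hc
        · have hi' : i = s := by omega
          subst hi'
          simp only [if_pos le_rfl, if_neg (by omega : ¬ i + 1 ≤ i), hws]
          exact hbc.1
      · rw [Finset.sum_range_succ]
        have e1 : (∑ i ∈ Finset.range s,
            J (if i ≤ s then w i else c.1) (if i + 1 ≤ s then w (i + 1) else c.1)) =
            ∑ i ∈ Finset.range s, J (w i) (w (i + 1)) := by
          refine Finset.sum_congr rfl fun i hi => ?_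
          have := Finset.mem_range.mp hi
          rw [if_pos (by omega), if_pos (by omega)]
        simp only
        rw [e1, ← hsum, if_pos le_rfl, if_neg (by omega : ¬ s + 1 ≤ s), hws, ← hbc.2]
        exact (cancel2 p.2 b.2 c.2).symm

lemma loopLift {V : Type} [DecidableEq V] {r : ℕ} (K : Set (Finset V))
    (J : V → V → (Fin r → ZMod 2)) (w : ℕ → V) (s : ℕ)
    (hadj : ∀ i < s, adjS K (w i) (w (i + 1))) :
    Relation.ReflTransGen (covAdj K J) (w 0, 0)
      (w s, ∑ i ∈ Finset.range s, J (w i) (w (i + 1))) := by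
  induction s with
  | zero =>
      simp only [Finset.range_zero, Finset.sum_empty]
      exact .refl
  | succ n ih =>
      have h1 := ih (fun i hi => hadj i (by omega))
      refine h1.tail ⟨hadj n (by omega), ?_⟩
      show _ + _ = _
      rw [Finset.sum_range_succ, ← add_assoc, addself, zero_add]

/- STATEMENT 18 -/
theorem stmt_18
    (V : Type) [DecidableEq V] (r : ℕ)
    (K : Set (Finset V))
    (hdown : ∀ s ∈ K, ∀ t ⊆ s, t ∈ K)
    (J : V → V → (Fin r → ZMod 2))
    (hsymm : ∀ a b, J a b = J b a)
    (hdiag : ∀ a, J a a = 0)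
    (hcoc : ∀ a b c : V, ({a, b, c} : Finset V) ∈ K → J a b + J b c + J a c = 0)
    (v0 : V) :
    -- (1) the component of (v0, 0) covers all of S iff S is connected
    ((∀ v : V, ∃ g : Fin r → ZMod 2,
        Relation.ReflTransGen (covAdj K J) (v0, 0) (v, g)) ↔
      (∀ u v : V, Relation.ReflTransGen (adjS K) u v)) ∧
    -- (2) fibre components are governed by the subgroup of loop indices
    (∀ v : V, ∀ g g' : Fin r → ZMod 2,
      (Relation.ReflTransGen (covAdj K J) (v, g) (v, g') ↔
        g + g' ∈ AddSubgroup.closure {h : Fin r → ZMod 2 |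
          ∃ (s : ℕ) (w : ℕ → V), w 0 = v ∧ w s = v ∧
            (∀ i < s, adjS K (w i) (w (i + 1))) ∧
            h = ∑ i ∈ Finset.range s, J (w i) (w (i + 1))})) := by
  constructor
  · constructor
    · intro hcov u v
      obtain ⟨gu, hu⟩ := hcov u
      obtain ⟨gv, hv⟩ := hcov v
      have pu := projP K J hu
      have pv := projP K J hv
      exact ((@Relation.ReflTransGen.symmetric _ _ ⟨adjS_symm K⟩).symm _ _ pu).trans pv
    · intro hconn v
      exact liftPath K J (hconn v0 v) 0
  · intro v g g'
    constructor
    · intro h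
      obtain ⟨s, w, hw0, hws, hadj, hsum⟩ := pathSum K J h
      exact AddSubgroup.subset_closure ⟨s, w, hw0, hws, hadj, hsum⟩
    · intro hmem
      have key : ∀ h ∈ AddSubgroup.closure {h : Fin r → ZMod 2 |
          ∃ (s : ℕ) (w : ℕ → V), w 0 = v ∧ w s = v ∧
            (∀ i < s, adjS K (w i) (w (i + 1))) ∧
            h = ∑ i ∈ Finset.range s, J (w i) (w (i + 1))},
          Relation.ReflTransGen (covAdj K J) (v, 0) (v, h) := by
        intro h hmem
        induction hmem using AddSubgroup.closure_induction with
        | mem x hx =>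
            obtain ⟨s, w, hw0, hws, hadj, rfl⟩ := hx
            have := loopLift K J w s hadj
            rwa [hw0, hws] at this
        | zero => exact .refl
        | add x y _ _ px py =>
            have h2 := trans_shift K J x py
            rw [zero_add] at h2
            have := px.trans h2
            rwa [add_comm y x] at this
        | neg x _ px => rwa [negeq]
      have h2 := trans_shift K J g (key _ hmem)
      have e : g + g' + g = g' := by
        rw [add_comm g g', add_assoc, addself, add_zero]
      rw [zero_add, e] at h2
      exact h2
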